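/- The action of U(a,b) on the unitary symmetric domain D_{a,b} is transitive: for every U ∈ D_{a,b} there exists g ∈ U(a,b) with g·0 = U. Consequently D_{a,b} ≅ U(a,b)/(U(a) × U(b)). -/

import Mathlib

open Matrix ComplexOrder

/-- The signature matrix `diag(1_a, -1_b)`. -/
def sigMatrix (a b : ℕ) : Matrix (Fin a ⊕ Fin b) (Fin a ⊕ Fin b) ℂ :=
  Matrix.fromBlocks 1 0 0 (-1)

/-- The group `U(a,b)`: complex matrices `g` with `g* diag(1_a, -1_b) g = diag(1_a, -1_b)`. -/
def Uab (a b : ℕ) : Set (Matrix (Fin a ⊕ Fin b) (Fin a ⊕ Fin b) ℂ) :=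
  {g | gᴴ * sigMatrix a b * g = sigMatrix a b}

/-- The unitary symmetric domain `D_{a,b}`. -/
def UnitaryDomain (a b : ℕ) : Set (Matrix (Fin a) (Fin b) ℂ) :=
  {U | (1 - Uᴴ * U).PosDef}

/-- The action `g · U = (AU + B)(CU + D)⁻¹`, where `g = [[A,B],[C,D]]` in blocks. -/
noncomputable def uabAct {a b : ℕ} (g : Matrix (Fin a ⊕ Fin b) (Fin a ⊕ Fin b) ℂ)
    (U : Matrix (Fin a) (Fin b) ℂ) : Matrix (Fin a) (Fin b) ℂ :=
  (g.toBlocks₁₁ * U + g.toBlocks₁₂) * (g.toBlocks₂₁ * U + g.toBlocks₂₂)⁻¹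


private lemma dot_self_eq {n : Type*} [Fintype n] (v : n → ℂ) :
    star v ⬝ᵥ v = ((‖(WithLp.equiv 2 (n → ℂ)).symm v‖ ^ 2 : ℝ) : ℂ) := by
  have := inner_self_eq_norm_sq_to_K (𝕜 := ℂ) ((WithLp.equiv 2 (n → ℂ)).symm v)
  rw [show inner ℂ ((WithLp.equiv 2 (n → ℂ)).symm v) ((WithLp.equiv 2 (n → ℂ)).symm v)
    = star v ⬝ᵥ v from (dotProduct_comm _ _ : v ⬝ᵥ star v = _)] at this
  push_cast at this ⊢; exact this

private lemma cs_dot {n : Type*} [Fintype n] (v w : n → ℂ) :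
    ‖star v ⬝ᵥ w‖ ≤ ‖(WithLp.equiv 2 (n → ℂ)).symm v‖ * ‖(WithLp.equiv 2 (n → ℂ)).symm w‖ := by
  have := norm_inner_le_norm (𝕜 := ℂ) ((WithLp.equiv 2 (n → ℂ)).symm v) ((WithLp.equiv 2 (n → ℂ)).symm w)
  rwa [show inner ℂ ((WithLp.equiv 2 (n → ℂ)).symm v) ((WithLp.equiv 2 (n → ℂ)).symm w)
    = star v ⬝ᵥ w from (dotProduct_comm _ _ : w ⬝ᵥ star v = _)] at this

private lemma dot_shift {m n : Type*} [Fintype m] [Fintype n] (M : Matrix m n ℂ)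
    (v : m → ℂ) (w : n → ℂ) : star v ⬝ᵥ (M *ᵥ w) = star (Mᴴ *ᵥ v) ⬝ᵥ w := by
  rw [star_mulVec, conjTranspose_conjTranspose, dotProduct_mulVec]

private lemma posdef_flip {a b : ℕ} (U : Matrix (Fin a) (Fin b) ℂ)
    (hU : (1 - Uᴴ * U).PosDef) : (1 - U * Uᴴ).PosDef := by
  refine Matrix.PosDef.of_dotProduct_mulVec_pos ?_ ?_
  · have : (1 - U * Uᴴ)ᴴ = 1 - U * Uᴴ := by simp [conjTranspose_sub, conjTranspose_mul]
    exact this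
  intro x hx
  have key : star x ⬝ᵥ ((U * Uᴴ) *ᵥ x) = star (Uᴴ *ᵥ x) ⬝ᵥ (Uᴴ *ᵥ x) := by
    rw [← mulVec_mulVec, dot_shift]
  have hsub : star x ⬝ᵥ ((1 - U * Uᴴ) *ᵥ x) = star x ⬝ᵥ x - star (Uᴴ *ᵥ x) ⬝ᵥ (Uᴴ *ᵥ x) := by
    rw [sub_mulVec, dotProduct_sub, one_mulVec, key]
  rw [hsub, dot_self_eq, dot_self_eq]
  set X := (WithLp.equiv 2 (Fin a → ℂ)).symm x with hX'
  set Y := (WithLp.equiv 2 (Fin b → ℂ)).symm (Uᴴ *ᵥ x) with hY'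
  have hXne : X ≠ 0 := by simpa [hX'] using hx
  have hX : (0:ℝ) < ‖X‖ := norm_pos_iff.2 hXne
  have main : ‖Y‖ < ‖X‖ := by
    by_cases hyz : Uᴴ *ᵥ x = 0
    · simp [hY', hyz, hX]
    have hYne : Y ≠ 0 := by simpa [hY'] using hyz
    have hY : (0:ℝ) < ‖Y‖ := norm_pos_iff.2 hYne
    have h1 := hU.dotProduct_mulVec_pos hyz
    have key2 : star (Uᴴ *ᵥ x) ⬝ᵥ ((Uᴴ * U) *ᵥ (Uᴴ *ᵥ x))
        = star (U *ᵥ (Uᴴ *ᵥ x)) ⬝ᵥ (U *ᵥ (Uᴴ *ᵥ x)) := by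
      rw [← mulVec_mulVec, dot_shift, conjTranspose_conjTranspose]
    have h2 : star (Uᴴ *ᵥ x) ⬝ᵥ ((1 - Uᴴ * U) *ᵥ (Uᴴ *ᵥ x))
        = star (Uᴴ *ᵥ x) ⬝ᵥ (Uᴴ *ᵥ x) - star (U *ᵥ (Uᴴ *ᵥ x)) ⬝ᵥ (U *ᵥ (Uᴴ *ᵥ x)) := by
      rw [sub_mulVec, dotProduct_sub, one_mulVec, key2]
    rw [h2, dot_self_eq, dot_self_eq] at h1
    set Z := (WithLp.equiv 2 (Fin a → ℂ)).symm (U *ᵥ (Uᴴ *ᵥ x)) with hZ'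
    rw [← Complex.ofReal_sub, Complex.zero_lt_real, sub_pos] at h1
    have hZY : ‖Z‖ < ‖Y‖ := by nlinarith [norm_nonneg Z, norm_nonneg Y]
    have hxz : star x ⬝ᵥ (U *ᵥ (Uᴴ *ᵥ x)) = star (Uᴴ *ᵥ x) ⬝ᵥ (Uᴴ *ᵥ x) := dot_shift U x _
    have hcs := cs_dot x (U *ᵥ (Uᴴ *ᵥ x))
    rw [hxz, dot_self_eq] at hcs
    rw [← hX', ← hY', ← hZ'] at hcs
    have hcs' : ‖Y‖ ^ 2 ≤ ‖X‖ * ‖Z‖ := by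
      simpa [Complex.norm_real, abs_of_nonneg (sq_nonneg ‖Y‖)] using hcs
    nlinarith
  rw [← Complex.ofReal_sub, Complex.zero_lt_real, sub_pos]
  nlinarith [norm_nonneg Y]

lemma mem_uab_blocks {a b : ℕ} (A : Matrix (Fin a) (Fin a) ℂ) (B : Matrix (Fin a) (Fin b) ℂ)
    (C : Matrix (Fin b) (Fin a) ℂ) (D : Matrix (Fin b) (Fin b) ℂ) :
    fromBlocks A B C D ∈ Uab a b ↔
      (Aᴴ * A - Cᴴ * C = 1 ∧ Aᴴ * B - Cᴴ * D = 0 ∧ Bᴴ * A - Dᴴ * C = 0 ∧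
        Bᴴ * B - Dᴴ * D = -1) := by
  simp only [Uab, sigMatrix, Set.mem_setOf_eq, fromBlocks_conjTranspose, fromBlocks_multiply,
    Matrix.mul_one, Matrix.mul_zero, Matrix.zero_mul, Matrix.one_mul, add_zero, zero_add,
    Matrix.mul_neg, Matrix.neg_mul, mul_one, fromBlocks_inj]
  simp only [← sub_eq_add_neg]

-- square-root normalizer
open scoped MatrixOrder in
lemma exists_normalizer {n : ℕ} {M : Matrix (Fin n) (Fin n) ℂ} (hM : M.PosDef) :
    ∃ X : Matrix (Fin n) (Fin n) ℂ, Xᴴ = X ∧ X * M * X = 1 ∧ IsUnit X.det := by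
  have hMi : M⁻¹.PosDef := hM.inv
  set X := CFC.sqrt M⁻¹ with hXdef
  have hXX : X * X = M⁻¹ := CFC.sqrt_mul_sqrt_self _ hMi.posSemidef.nonneg
  have hXH : Xᴴ = X := (CFC.sqrt_nonneg M⁻¹).posSemidef.isHermitian
  have hMdet : IsUnit M.det := (isUnit_iff_isUnit_det M).mp hM.isUnit
  have hdet : IsUnit X.det := by
    have h1 : IsUnit (M⁻¹).det := (isUnit_iff_isUnit_det _).mp hMi.isUnit
    rw [← hXX, det_mul] at h1
    exact isUnit_of_mul_isUnit_left h1
  refine ⟨X, hXH, ?_, hdet⟩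
  have hM' : M = (X * X)⁻¹ := by rw [hXX, Matrix.nonsing_inv_nonsing_inv _ hMdet]
  rw [hM', Matrix.mul_inv_rev]
  calc X * (X⁻¹ * X⁻¹) * X = (X * X⁻¹) * (X⁻¹ * X) := by noncomm_ring
    _ = 1 := by rw [Matrix.mul_nonsing_inv _ hdet, Matrix.nonsing_inv_mul _ hdet, one_mul]

-- D-block invertibility
lemma d_unit {a b : ℕ} {B : Matrix (Fin a) (Fin b) ℂ} {D : Matrix (Fin b) (Fin b) ℂ}
    (e22 : Bᴴ * B - Dᴴ * D = -1) : IsUnit D.det := by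
  have h : Dᴴ * D = 1 + Bᴴ * B := by
    have h2 := eq_add_of_sub_eq e22
    rw [sub_eq_iff_eq_add] at e22
    rw [e22]; abel
  have hpd : (Dᴴ * D).PosDef := by
    rw [h]; exact Matrix.PosDef.add_posSemidef Matrix.PosDef.one
      (posSemidef_conjTranspose_mul_self B)
  have := (isUnit_iff_isUnit_det _).mp hpd.isUnit
  rw [det_mul, det_conjTranspose] at this
  exact isUnit_of_mul_isUnit_right this

lemma uabAct_zero {a b : ℕ} (g : Matrix (Fin a ⊕ Fin b) (Fin a ⊕ Fin b) ℂ) :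
    uabAct g (0 : Matrix (Fin a) (Fin b) ℂ) = g.toBlocks₁₂ * g.toBlocks₂₂⁻¹ := by
  simp [uabAct]

lemma sig_mul_sig {a b : ℕ} : sigMatrix a b * sigMatrix a b = 1 := by
  simp only [sigMatrix, fromBlocks_multiply, Matrix.mul_one, Matrix.mul_zero, Matrix.zero_mul,
    Matrix.one_mul, add_zero, zero_add, Matrix.mul_neg, neg_neg, neg_zero]
  rw [← fromBlocks_one]

lemma sig_det_unit {a b : ℕ} : IsUnit (sigMatrix a b).det := by
  have := congrArg det (sig_mul_sig (a := a) (b := b))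
  rw [det_mul, det_one] at this
  exact IsUnit.of_mul_eq_one _ this

lemma uab_det_unit {a b : ℕ} {g : Matrix (Fin a ⊕ Fin b) (Fin a ⊕ Fin b) ℂ}
    (hg : g ∈ Uab a b) : IsUnit g.det := by
  rw [isUnit_iff_ne_zero]
  intro h0
  have := congrArg det hg
  rw [det_mul, det_mul, h0, mul_zero] at this
  exact (isUnit_iff_ne_zero.mp sig_det_unit) this.symm

lemma uab_mul_mem {a b : ℕ} {g g' : Matrix (Fin a ⊕ Fin b) (Fin a ⊕ Fin b) ℂ}
    (hg : g ∈ Uab a b) (hg' : g' ∈ Uab a b) : g * g' ∈ Uab a b := by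
  simp only [Uab, Set.mem_setOf_eq] at *
  rw [conjTranspose_mul]
  calc g'ᴴ * gᴴ * sigMatrix a b * (g * g') = g'ᴴ * (gᴴ * sigMatrix a b * g) * g' := by
        noncomm_ring
    _ = sigMatrix a b := by rw [hg, hg']

lemma uab_inv_eq {a b : ℕ} {g : Matrix (Fin a ⊕ Fin b) (Fin a ⊕ Fin b) ℂ}
    (hg : g ∈ Uab a b) : g⁻¹ = sigMatrix a b * gᴴ * sigMatrix a b := by
  apply Matrix.inv_eq_left_inv
  have : sigMatrix a b * (gᴴ * sigMatrix a b * g) = sigMatrix a b * sigMatrix a b := by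
    rw [hg]
  rw [sig_mul_sig] at this
  rw [← this]; noncomm_ring

lemma uab_inv_mem {a b : ℕ} {g : Matrix (Fin a ⊕ Fin b) (Fin a ⊕ Fin b) ℂ}
    (hg : g ∈ Uab a b) : g⁻¹ ∈ Uab a b := by
  have hdet : IsUnit g.det := uab_det_unit hg
  have hdetH : IsUnit gᴴ.det := by rw [det_conjTranspose]; exact hdet.star
  simp only [Uab, Set.mem_setOf_eq] at *
  rw [Matrix.conjTranspose_nonsing_inv]
  have h2 : (gᴴ)⁻¹ * (gᴴ * sigMatrix a b * g) * g⁻¹ = (gᴴ)⁻¹ * sigMatrix a b * g⁻¹ := by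
    rw [hg]
  calc (gᴴ)⁻¹ * sigMatrix a b * g⁻¹ = (gᴴ)⁻¹ * (gᴴ * sigMatrix a b * g) * g⁻¹ := h2.symm
    _ = ((gᴴ)⁻¹ * gᴴ) * sigMatrix a b * (g * g⁻¹) := by noncomm_ring
    _ = sigMatrix a b := by
        rw [Matrix.nonsing_inv_mul _ hdetH, Matrix.mul_nonsing_inv _ hdet, one_mul,
          Matrix.mul_one]

/-- The action of `U(a,b)` on `D_{a,b}` is transitive: every `U ∈ D_{a,b}` equals `g · 0`
for some `g ∈ U(a,b)`; consequently two elements of `U(a,b)` move the base point `0` to the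
same point exactly when they differ by right multiplication by an element of the stabilizer
of `0`, so `D_{a,b} ≅ U(a,b)/(U(a) × U(b))`. -/
theorem statement8 {a b : ℕ} (ha : b ≤ a) (hb : 1 ≤ b) :
    (∀ U ∈ UnitaryDomain a b, ∃ g ∈ Uab a b,
      uabAct g (0 : Matrix (Fin a) (Fin b) ℂ) = U) ∧
    (∀ g ∈ Uab a b, ∀ g' ∈ Uab a b,
      (uabAct g (0 : Matrix (Fin a) (Fin b) ℂ) =
          uabAct g' (0 : Matrix (Fin a) (Fin b) ℂ) ↔
        ∃ h ∈ Uab a b,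
          uabAct h (0 : Matrix (Fin a) (Fin b) ℂ) = 0 ∧ g' = g * h)) := by
  constructor
  · -- transitivity
    intro U hU
    have hN : (1 - Uᴴ * U).PosDef := hU
    have hM : (1 - U * Uᴴ).PosDef := posdef_flip U hN
    obtain ⟨X, hXH, hX1, hXdet⟩ := exists_normalizer hM
    obtain ⟨Y, hYH, hY1, hYdet⟩ := exists_normalizer hN
    refine ⟨fromBlocks X (U * Y) (Uᴴ * X) Y, ?_, ?_⟩
    · rw [mem_uab_blocks]
      refine ⟨?_, ?_, ?_, ?_⟩
      · rw [hXH, conjTranspose_mul, hXH, conjTranspose_conjTranspose, ← hX1]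
        simp only [Matrix.mul_sub, Matrix.sub_mul, Matrix.mul_one, Matrix.one_mul,
          Matrix.mul_assoc]
      · rw [hXH, conjTranspose_mul, hXH, conjTranspose_conjTranspose]
        simp [Matrix.mul_assoc]
      · rw [hYH, conjTranspose_mul, hYH]
        simp [Matrix.mul_assoc]
      · rw [conjTranspose_mul, hYH, ← hY1]
        simp only [Matrix.mul_sub, Matrix.sub_mul, Matrix.mul_one, Matrix.one_mul,
          Matrix.mul_assoc, neg_sub]
    · rw [uabAct_zero]
      simp only [toBlocks_fromBlocks₁₂, toBlocks_fromBlocks₂₂]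
      rw [Matrix.mul_assoc, Matrix.mul_nonsing_inv _ hYdet, Matrix.mul_one]
  · -- the stabilizer statement
    intro g hg g' hg'
    obtain ⟨A, B, C, D, rfl⟩ : ∃ A B C D, g = fromBlocks A B C D :=
      ⟨_, _, _, _, (fromBlocks_toBlocks g).symm⟩
    obtain ⟨A', B', C', D', rfl⟩ : ∃ A B C D, g' = fromBlocks A B C D :=
      ⟨_, _, _, _, (fromBlocks_toBlocks g').symm⟩
    obtain ⟨e11, e12, e21, e22⟩ := (mem_uab_blocks A B C D).mp hg
    obtain ⟨f11, f12, f21, f22⟩ := (mem_uab_blocks A' B' C' D').mp hg'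
    have hD : IsUnit D.det := d_unit e22
    have hD' : IsUnit D'.det := d_unit f22
    rw [uabAct_zero, uabAct_zero]
    simp only [toBlocks_fromBlocks₁₂, toBlocks_fromBlocks₂₂]
    constructor
    · intro heq
      have hinv : (fromBlocks A B C D)⁻¹ = fromBlocks Aᴴ (-Cᴴ) (-Bᴴ) Dᴴ := by
        rw [uab_inv_eq hg, sigMatrix, fromBlocks_conjTranspose, fromBlocks_multiply,
          fromBlocks_multiply]
        simp [Matrix.neg_mul, Matrix.mul_neg]
      have hB' : B' = B * D⁻¹ * D' := by
        rw [heq, Matrix.mul_assoc, Matrix.nonsing_inv_mul _ hD', Matrix.mul_one]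
      have hAB : Aᴴ * B = Cᴴ * D := sub_eq_zero.mp e12
      have hkey : Aᴴ * B' = Cᴴ * D' := by
        rw [hB', ← Matrix.mul_assoc, ← Matrix.mul_assoc, hAB, Matrix.mul_assoc,
          Matrix.mul_assoc, ← Matrix.mul_assoc D, Matrix.mul_nonsing_inv _ hD,
          Matrix.one_mul]
      refine ⟨(fromBlocks A B C D)⁻¹ * fromBlocks A' B' C' D',
        uab_mul_mem (uab_inv_mem hg) hg', ?_, ?_⟩
      · rw [uabAct_zero, hinv, fromBlocks_multiply]
        simp only [toBlocks_fromBlocks₁₂]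
        rw [hkey]
        simp [Matrix.neg_mul]
      · rw [← Matrix.mul_assoc, Matrix.mul_nonsing_inv _ (uab_det_unit hg), Matrix.one_mul]
    · rintro ⟨h, hh, hact, hprod⟩
      obtain ⟨Ah, Bh, Ch, Dh, rfl⟩ : ∃ A B C D, h = fromBlocks A B C D :=
        ⟨_, _, _, _, (fromBlocks_toBlocks h).symm⟩
      obtain ⟨k11, k12, k21, k22⟩ := (mem_uab_blocks Ah Bh Ch Dh).mp hh
      have hDh : IsUnit Dh.det := d_unit k22
      rw [uabAct_zero] at hact
      simp only [toBlocks_fromBlocks₁₂, toBlocks_fromBlocks₂₂] at hact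
      have hBh : Bh = 0 := by
        have := congrArg (· * Dh) hact
        simpa [Matrix.mul_assoc, Matrix.nonsing_inv_mul _ hDh] using this
      subst hBh
      rw [fromBlocks_multiply] at hprod
      simp only [Matrix.mul_zero, add_zero, zero_add] at hprod
      obtain ⟨-, hB', -, hD'eq⟩ := fromBlocks_inj.mp hprod
      rw [hB', hD'eq, Matrix.mul_inv_rev, ← Matrix.mul_assoc, Matrix.mul_assoc B,
        Matrix.mul_nonsing_inv _ hDh, Matrix.mul_one]
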